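/- Let (X,φ) be a mixing synchronizing dynamical system and p, q synchronizing periodic points. Then the global stable set Xˢ(p), the global unstable set Xᵘ(q), and the intersection Xˢ(p) ∩ Xᵘ(q) are each dense in X. -/

import Mathlib

open Filter Topology Set

namespace Paper

variable {X : Type*} [MetricSpace X] [CompactSpace X]

/-- The `n`-th iterate (for `n : ℤ`) of the homeomorphism `φ`. -/
def It (φ : X ≃ₜ X) (n : ℤ) : X → X := fun x => (φ.toEquiv ^ n) x

/-- The local stable set `Xˢ(x, ε)`. -/
def locS (φ : X ≃ₜ X) (x : X) (ε : ℝ) : Set X :=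
  {y | ∀ n : ℕ, dist (It φ n x) (It φ n y) ≤ ε}

/-- The local unstable set `Xᵘ(x, ε)`. -/
def locU (φ : X ≃ₜ X) (x : X) (ε : ℝ) : Set X :=
  {y | ∀ n : ℕ, dist (It φ (-(n : ℤ)) x) (It φ (-(n : ℤ)) y) ≤ ε}

/-- The set `D_ε` on which the bracket is defined. -/
def Dset (φ : X ≃ₜ X) (ε : ℝ) : Set (X × X) :=
  {p | (locS φ p.1 ε ∩ locU φ p.2 ε).Nonempty}

/-- `(X, φ)` is expansive with expansiveness constant `εX`. -/
def IsExpansive (φ : X ≃ₜ X) (εX : ℝ) : Prop :=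
  0 < εX ∧ ∀ x y : X, (∀ n : ℤ, dist (It φ n x) (It φ n y) ≤ εX) → x = y

/-- The metric is adapted (Fried), with constants `η` and `lam`. -/
def IsAdapted (φ : X ≃ₜ X) (η lam : ℝ) : Prop :=
  0 < η ∧ 0 < lam ∧ lam < 1 ∧
    (∀ x y : X, y ∈ locS φ x η → dist (φ x) (φ y) ≤ lam * dist x y) ∧
    (∀ x y : X, y ∈ locU φ x η → dist (φ.symm x) (φ.symm y) ≤ lam * dist x y)

/-- `p` is a periodic point of `φ`. -/
def IsPeriodic (φ : X ≃ₜ X) (p : X) : Prop :=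
  ∃ n : ℕ, 1 ≤ n ∧ It φ n p = p

/-- `x` is a synchronizing point: `(x, x)` is in the interior of `D_ε` for
some `0 < ε ≤ ε₀`. -/
def IsSyncPt (φ : X ≃ₜ X) (ε₀ : ℝ) (x : X) : Prop :=
  ∃ ε : ℝ, 0 < ε ∧ ε ≤ ε₀ ∧ (x, x) ∈ interior (Dset φ ε)

/-- `(X, φ)` is irreducible. -/
def Irred (φ : X ≃ₜ X) : Prop :=
  ∀ U V : Set X, IsOpen U → IsOpen V → U.Nonempty → V.Nonempty →
    ∃ n : ℕ, 0 < n ∧ (It φ n '' U ∩ V).Nonempty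

/-- `(X, φ)` is mixing. -/
def Mixing (φ : X ≃ₜ X) : Prop :=
  ∀ U V : Set X, IsOpen U → IsOpen V → U.Nonempty → V.Nonempty →
    ∃ N : ℕ, ∀ n : ℕ, N ≤ n → (It φ n '' U ∩ V).Nonempty

/-- Every point of `(X, φ)` is non-wandering. -/
def NonWandering (φ : X ≃ₜ X) : Prop :=
  ∀ x : X, ∀ U ∈ 𝓝 x, ∃ n : ℕ, 0 < n ∧ (It φ n '' U ∩ U).Nonempty

/-- Stable equivalence `x ∼ₛ y`. -/
def StableEq (φ : X ≃ₜ X) (x y : X) : Prop :=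
  Tendsto (fun n : ℕ => dist (It φ n x) (It φ n y)) atTop (𝓝 0)

/-- Unstable equivalence `x ∼ᵤ y`. -/
def UnstableEq (φ : X ≃ₜ X) (x y : X) : Prop :=
  Tendsto (fun n : ℕ => dist (It φ (-(n : ℤ)) x) (It φ (-(n : ℤ)) y)) atTop (𝓝 0)

/-- Local conjugacy `x ∼_lc y`: a homeomorphism `γ : U → V` of open
neighborhoods with `γ x = y` and `sup_{z ∈ U} d(φⁿ z, φⁿ (γ z)) → 0` as
`n → ±∞`. -/
def LocConj (φ : X ≃ₜ X) (x y : X) : Prop :=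
  ∃ (U V : Set X) (γ γinv : X → X),
    IsOpen U ∧ IsOpen V ∧ x ∈ U ∧ y ∈ V ∧ γ x = y ∧
    Set.MapsTo γ U V ∧ Set.MapsTo γinv V U ∧
    (∀ z ∈ U, γinv (γ z) = z) ∧ (∀ w ∈ V, γ (γinv w) = w) ∧
    ContinuousOn γ U ∧ ContinuousOn γinv V ∧
    (∀ ε : ℝ, 0 < ε → ∃ N : ℕ, ∀ n : ℤ, (N : ℤ) ≤ |n| → ∀ z ∈ U,
      dist (It φ n z) (It φ n (γ z)) ≤ ε)

/-- Stable local conjugacy `x ∼_lcs y`: a homeomorphism of `Xᵘ(x, δ)` onto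
its image in `Xᵘ(y, δ')` sending `x` to `y`, uniformly asymptotic in forward
time. -/
def StableLC (φ : X ≃ₜ X) (x y : X) : Prop :=
  ∃ (δ δ' : ℝ) (γ : X → X), 0 < δ ∧ 0 < δ' ∧
    Set.MapsTo γ (locU φ x δ) (locU φ y δ') ∧
    Set.InjOn γ (locU φ x δ) ∧ ContinuousOn γ (locU φ x δ) ∧ γ x = y ∧
    (∀ ε : ℝ, 0 < ε → ∃ N : ℕ, ∀ n : ℕ, N ≤ n → ∀ z ∈ locU φ x δ,
      dist (It φ n z) (It φ n (γ z)) ≤ ε)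

/-- Unstable local conjugacy `x ∼_lcu y`: a homeomorphism of `Xˢ(x, δ)` onto
its image in `Xˢ(y, δ')` sending `x` to `y`, uniformly asymptotic in backward
time. -/
def UnstableLC (φ : X ≃ₜ X) (x y : X) : Prop :=
  ∃ (δ δ' : ℝ) (γ : X → X), 0 < δ ∧ 0 < δ' ∧
    Set.MapsTo γ (locS φ x δ) (locS φ y δ') ∧
    Set.InjOn γ (locS φ x δ) ∧ ContinuousOn γ (locS φ x δ) ∧ γ x = y ∧
    (∀ ε : ℝ, 0 < ε → ∃ N : ℕ, ∀ n : ℕ, N ≤ n → ∀ z ∈ locS φ x δ,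
      dist (It φ (-(n : ℤ)) z) (It φ (-(n : ℤ)) (γ z)) ≤ ε)

section Helpers

set_option linter.unusedSectionVars false

lemma It_add (φ : X ≃ₜ X) (a b : ℤ) (x : X) : It φ (a + b) x = It φ a (It φ b x) := by
  simp [It, zpow_add, Equiv.Perm.mul_apply]

lemma It_zero (φ : X ≃ₜ X) (x : X) : It φ 0 x = x := rfl

lemma It_one (φ : X ≃ₜ X) (x : X) : It φ 1 x = φ x := by
  simp [It]

lemma It_neg_one (φ : X ≃ₜ X) (x : X) : It φ (-1) x = φ.symm x := by
  simp [It]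

lemma continuous_It (φ : X ≃ₜ X) (k : ℤ) : Continuous (It φ k) := by
  induction k using Int.induction_on with
  | zero => exact continuous_id
  | succ n ih =>
      have h : It φ ((n:ℤ)+1) = fun x => φ (It φ n x) := by
        funext x
        rw [show ((n:ℤ)+1) = 1 + n by ring, It_add, It_one]
      rw [h]; exact φ.continuous.comp ih
  | pred n ih =>
      have h : It φ (-(n:ℤ)-1) = fun x => φ.symm (It φ (-(n:ℤ)) x) := by
        funext x
        rw [show (-(n:ℤ)-1) = -1 + -n by ring, It_add, It_neg_one]
      rw [h]; exact φ.symm.continuous.comp ih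

lemma It_neg_fix {φ : X ≃ₜ X} {p : X} {m : ℤ} (h : It φ m p = p) : It φ (-m) p = p := by
  have h2 := It_add φ (-m) m p
  rw [h, neg_add_cancel, It_zero] at h2
  exact h2.symm

lemma It_fix {φ : X ≃ₜ X} {p : X} {m : ℤ} (h : It φ m p = p) :
    ∀ k : ℤ, It φ (m * k) p = p := by
  intro k
  induction k using Int.induction_on with
  | zero => simp [It_zero]
  | succ n ih => rw [show m*((n:ℤ)+1) = m + m*n by ring, It_add, ih, h]
  | pred n ih => rw [show m*(-(n:ℤ)-1) = -m + m*(-n) by ring, It_add, ih, It_neg_fix h]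

lemma It_image (φ : X ≃ₜ X) (n : ℤ) (S : Set X) : It φ n '' S = It φ (-n) ⁻¹' S := by
  ext w
  constructor
  · rintro ⟨u, hu, rfl⟩
    have h : It φ (-n) (It φ n u) = u := by rw [← It_add, neg_add_cancel, It_zero]
    simpa [Set.mem_preimage, h] using hu
  · intro hw
    exact ⟨It φ (-n) w, hw, by rw [← It_add, add_neg_cancel, It_zero]⟩

lemma stable_contract {φ : X ≃ₜ X} {η lam : ℝ} (had : IsAdapted φ η lam)
    {ε : ℝ} (hεη : ε ≤ η) {x y : X} (h : y ∈ locS φ x ε) :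
    ∀ k : ℕ, dist (It φ k x) (It φ k y) ≤ lam ^ k * ε := by
  obtain ⟨hη, hlam0, hlam1, hS, hU⟩ := had
  intro k
  induction k with
  | zero => simpa using h 0
  | succ k ih =>
    have hmem : It φ k y ∈ locS φ (It φ k x) η := by
      intro j
      have key : ∀ z : X, It φ j (It φ k z) = It φ ((j+k : ℕ) : ℤ) z := by
        intro z; rw [show (((j+k:ℕ)):ℤ) = (j:ℤ) + (k:ℤ) by push_cast; ring, It_add]
      rw [key x, key y]
      exact le_trans (h (j+k)) hεη
    have step := hS (It φ k x) (It φ k y) hmem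
    have hrw : ∀ z : X, It φ ((k+1 : ℕ) : ℤ) z = φ (It φ k z) := by
      intro z
      rw [show ((k+1:ℕ):ℤ) = 1 + (k:ℤ) by push_cast; ring, It_add, It_one]
    rw [hrw x, hrw y]
    calc dist (φ (It φ k x)) (φ (It φ k y)) ≤ lam * dist (It φ k x) (It φ k y) := step
    _ ≤ lam * (lam ^ k * ε) := by nlinarith
    _ = lam ^ (k+1) * ε := by ring

lemma unstable_contract {φ : X ≃ₜ X} {η lam : ℝ} (had : IsAdapted φ η lam)
    {ε : ℝ} (hεη : ε ≤ η) {x y : X} (h : y ∈ locU φ x ε) :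
    ∀ k : ℕ, dist (It φ (-(k:ℤ)) x) (It φ (-(k:ℤ)) y) ≤ lam ^ k * ε := by
  obtain ⟨hη, hlam0, hlam1, hS, hU⟩ := had
  intro k
  induction k with
  | zero => simpa using h 0
  | succ k ih =>
    have hmem : It φ (-(k:ℤ)) y ∈ locU φ (It φ (-(k:ℤ)) x) η := by
      intro j
      have key : ∀ z : X, It φ (-(j:ℤ)) (It φ (-(k:ℤ)) z) = It φ (-((j+k : ℕ) : ℤ)) z := by
        intro z; rw [show (-((j+k:ℕ):ℤ)) = -(j:ℤ) + -(k:ℤ) by push_cast; ring, It_add]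
      rw [key x, key y]
      exact le_trans (h (j+k)) hεη
    have step := hU (It φ (-(k:ℤ)) x) (It φ (-(k:ℤ)) y) hmem
    have hrw : ∀ z : X, It φ (-((k+1 : ℕ) : ℤ)) z = φ.symm (It φ (-(k:ℤ)) z) := by
      intro z
      rw [show (-((k+1:ℕ):ℤ)) = -1 + -(k:ℤ) by push_cast; ring, It_add, It_neg_one]
    rw [hrw x, hrw y]
    calc dist (φ.symm (It φ (-(k:ℤ)) x)) (φ.symm (It φ (-(k:ℤ)) y))
        ≤ lam * dist (It φ (-(k:ℤ)) x) (It φ (-(k:ℤ)) y) := step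
    _ ≤ lam * (lam ^ k * ε) := by nlinarith
    _ = lam ^ (k+1) * ε := by ring

lemma rect {φ : X ≃ₜ X} {ε₀ : ℝ} {x : X} (h : IsSyncPt φ ε₀ x) :
    ∃ (ε : ℝ) (O₁ O₂ : Set X), 0 < ε ∧ ε ≤ ε₀ ∧ IsOpen O₁ ∧ IsOpen O₂ ∧ x ∈ O₁ ∧ x ∈ O₂ ∧
      ∀ a ∈ O₁, ∀ b ∈ O₂, (locS φ a ε ∩ locU φ b ε).Nonempty := by
  obtain ⟨ε, hε0, hεle, hint⟩ := h
  have h1 : Dset φ ε ∈ 𝓝 ((x, x) : X × X) := mem_interior_iff_mem_nhds.mp hint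
  rw [mem_nhds_prod_iff'] at h1
  obtain ⟨O₁, O₂, hO₁, hx1, hO₂, hx2, hsub⟩ := h1
  exact ⟨ε, O₁, O₂, hε0, hεle, hO₁, hO₂, hx1, hx2, fun a ha b hb => show (locS φ a ε ∩ locU φ b ε).Nonempty from hsub (Set.mk_mem_prod ha hb)⟩

lemma dense_unstable {φ : X ≃ₜ X} {η lam : ℝ} (had : IsAdapted φ η lam) (hmix : Mixing φ)
    {q : X} (hq : IsPeriodic φ q) (hqs : IsSyncPt φ η q) :
    Dense {z : X | UnstableEq φ q z} := by
  obtain ⟨ε, O₁, O₂, hε0, hεη, hO₁, hO₂, hq1, hq2, hbr⟩ := rect hqs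
  obtain ⟨m, hm1, hmq⟩ := hq
  have hlam0 := had.2.1
  have hlam1 := had.2.2.1
  rw [Metric.dense_iff]
  intro z r hr
  have hdecay : Tendsto (fun j : ℕ => lam ^ j * ε) atTop (𝓝 0) := by
    simpa using (tendsto_pow_atTop_nhds_zero_of_lt_one hlam0.le hlam1).mul_const ε
  obtain ⟨N₂, hN₂⟩ :=
    eventually_atTop.mp (hdecay.eventually (gt_mem_nhds (by linarith : (0:ℝ) < r/2)))
  obtain ⟨N, hN⟩ := hmix O₁ (Metric.ball z (r/2)) hO₁ Metric.isOpen_ball ⟨q, hq1⟩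
    ⟨z, Metric.mem_ball_self (by linarith)⟩
  set n := m * (N + N₂) with hn
  have hm0 : 0 < m := hm1
  have hnN : N ≤ n := le_trans (Nat.le_add_right _ _) (Nat.le_mul_of_pos_left _ hm0)
  have hnN₂ : N₂ ≤ n := le_trans (Nat.le_add_left _ _) (Nat.le_mul_of_pos_left _ hm0)
  obtain ⟨v, ⟨u, hu, rfl⟩, hv⟩ := hN n hnN
  obtain ⟨w, hwS, hwU⟩ := hbr u hu q hq2
  have hfixq : It φ (n:ℤ) q = q := by
    have h := It_fix hmq ((N+N₂ : ℕ) : ℤ)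
    rw [show ((n:ℕ):ℤ) = (m:ℤ) * ((N+N₂:ℕ):ℤ) by push_cast [hn]; ring]
    exact h
  refine ⟨It φ (n:ℤ) w, Metric.mem_ball.mpr ?_, ?_⟩
  · have h1 : dist (It φ (n:ℤ) u) (It φ (n:ℤ) w) ≤ lam ^ n * ε := stable_contract had hεη hwS n
    have h2 : dist (It φ (n:ℤ) u) z < r/2 := Metric.mem_ball.mp hv
    have h3 : lam ^ n * ε < r/2 := hN₂ n hnN₂
    calc dist (It φ (n:ℤ) w) z
        ≤ dist (It φ (n:ℤ) w) (It φ (n:ℤ) u) + dist (It φ (n:ℤ) u) z := dist_triangle _ _ _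
    _ < r := by rw [dist_comm (It φ (n:ℤ) w)]; linarith
  · show UnstableEq φ q (It φ (n:ℤ) w)
    refine squeeze_zero' (Eventually.of_forall fun k => dist_nonneg) ?_
      (hdecay.comp (tendsto_sub_atTop_nat n))
    filter_upwards [eventually_ge_atTop n] with k hk
    have e1 : It φ (-(k:ℤ)) (It φ (n:ℤ) w) = It φ (-(((k-n:ℕ)):ℤ)) w := by
      rw [← It_add, show (-(k:ℤ) + (n:ℤ)) = -(((k-n:ℕ)):ℤ) by omega]
    have e2 : It φ (-(k:ℤ)) q = It φ (-(((k-n:ℕ)):ℤ)) q := by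
      rw [show (-(k:ℤ)) = -(((k-n:ℕ)):ℤ) + -(n:ℤ) by omega, It_add, It_neg_fix hfixq]
    rw [e1, e2]
    exact unstable_contract had hεη hwU (k-n)

lemma dense_stable {φ : X ≃ₜ X} {η lam : ℝ} (had : IsAdapted φ η lam) (hmix : Mixing φ)
    {p : X} (hp : IsPeriodic φ p) (hps : IsSyncPt φ η p) :
    Dense {z : X | StableEq φ p z} := by
  obtain ⟨ε, O₁, O₂, hε0, hεη, hO₁, hO₂, hp1, hp2, hbr⟩ := rect hps
  obtain ⟨m, hm1, hmp⟩ := hp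
  have hlam0 := had.2.1
  have hlam1 := had.2.2.1
  rw [Metric.dense_iff]
  intro z r hr
  have hdecay : Tendsto (fun j : ℕ => lam ^ j * ε) atTop (𝓝 0) := by
    simpa using (tendsto_pow_atTop_nhds_zero_of_lt_one hlam0.le hlam1).mul_const ε
  obtain ⟨N₂, hN₂⟩ :=
    eventually_atTop.mp (hdecay.eventually (gt_mem_nhds (by linarith : (0:ℝ) < r/2)))
  obtain ⟨N, hN⟩ := hmix (Metric.ball z (r/2)) O₂ Metric.isOpen_ball hO₂
    ⟨z, Metric.mem_ball_self (by linarith)⟩ ⟨p, hp2⟩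
  set n := m * (N + N₂) with hn
  have hm0 : 0 < m := hm1
  have hnN : N ≤ n := le_trans (Nat.le_add_right _ _) (Nat.le_mul_of_pos_left _ hm0)
  have hnN₂ : N₂ ≤ n := le_trans (Nat.le_add_left _ _) (Nat.le_mul_of_pos_left _ hm0)
  obtain ⟨v, ⟨u, hu, rfl⟩, hv⟩ := hN n hnN
  obtain ⟨w, hwS, hwU⟩ := hbr p hp1 (It φ (n:ℤ) u) hv
  have hfixp : It φ (n:ℤ) p = p := by
    have h := It_fix hmp ((N+N₂ : ℕ) : ℤ)
    rw [show ((n:ℕ):ℤ) = (m:ℤ) * ((N+N₂:ℕ):ℤ) by push_cast [hn]; ring]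
    exact h
  have hinv : It φ (-(n:ℤ)) (It φ (n:ℤ) u) = u := by
    rw [← It_add, neg_add_cancel, It_zero]
  refine ⟨It φ (-(n:ℤ)) w, Metric.mem_ball.mpr ?_, ?_⟩
  · have h1 : dist (It φ (-(n:ℤ)) (It φ (n:ℤ) u)) (It φ (-(n:ℤ)) w) ≤ lam ^ n * ε :=
      unstable_contract had hεη hwU n
    rw [hinv] at h1
    have h2 : dist u z < r/2 := Metric.mem_ball.mp hu
    have h3 : lam ^ n * ε < r/2 := hN₂ n hnN₂
    calc dist (It φ (-(n:ℤ)) w) z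
        ≤ dist (It φ (-(n:ℤ)) w) u + dist u z := dist_triangle _ _ _
    _ < r := by rw [dist_comm (It φ (-(n:ℤ)) w)]; linarith
  · show StableEq φ p (It φ (-(n:ℤ)) w)
    refine squeeze_zero' (Eventually.of_forall fun k => dist_nonneg) ?_
      (hdecay.comp (tendsto_sub_atTop_nat n))
    filter_upwards [eventually_ge_atTop n] with k hk
    have e1 : It φ (k:ℤ) (It φ (-(n:ℤ)) w) = It φ (((k-n:ℕ)):ℤ) w := by
      rw [← It_add, show ((k:ℤ) + -(n:ℤ)) = (((k-n:ℕ)):ℤ) by omega]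
    have e2 : It φ (k:ℤ) p = It φ (((k-n:ℕ)):ℤ) p := by
      rw [show ((k:ℤ)) = (((k-n:ℕ)):ℤ) + (n:ℤ) by omega, It_add, hfixp]
    rw [e1, e2]
    exact stable_contract had hεη hwS (k-n)

end Helpers

/-- in a mixing synchronizing system, for synchronizing periodic
points `p, q`, the sets `Xˢ(p)`, `Xᵘ(q)` and `Xˢ(p) ∩ Xᵘ(q)` are dense. -/
theorem sync_periodic_stable_unstable_dense (φ : X ≃ₜ X) (εX η lam : ℝ)
    (hexp : IsExpansive φ εX) (had : IsAdapted φ η lam) (hmix : Mixing φ)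
    (p q : X) (hp : IsPeriodic φ p) (hq : IsPeriodic φ q)
    (hps : IsSyncPt φ (min η (εX / 2)) p) (hqs : IsSyncPt φ (min η (εX / 2)) q) :
    Dense {z : X | StableEq φ p z} ∧ Dense {z : X | UnstableEq φ q z} ∧
      Dense ({z : X | StableEq φ p z} ∩ {z : X | UnstableEq φ q z}) := by
  have hps' : IsSyncPt φ η p := by
    obtain ⟨ε, h0, hle, hint⟩ := hps
    exact ⟨ε, h0, le_trans hle (min_le_left _ _), hint⟩
  have hqs' : IsSyncPt φ η q := by
    obtain ⟨ε, h0, hle, hint⟩ := hqs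
    exact ⟨ε, h0, le_trans hle (min_le_left _ _), hint⟩
  have hDS := dense_stable had hmix hp hps'
  have hDU := dense_unstable had hmix hq hqs'
  refine ⟨hDS, hDU, ?_⟩
  -- the intersection
  obtain ⟨ε, O₁, O₂, hε0, hεη, hO₁, hO₂, hp1, hp2, hbr⟩ := rect hps'
  obtain ⟨mp, hmp1, hmpfix⟩ := hp
  obtain ⟨mq, hmq1, hmqfix⟩ := hq
  have hlam0 := had.2.1
  have hlam1 := had.2.2.1
  rw [Metric.dense_iff]
  intro z r hr
  have hdecay : Tendsto (fun j : ℕ => lam ^ j * ε) atTop (𝓝 0) := by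
    simpa using (tendsto_pow_atTop_nhds_zero_of_lt_one hlam0.le hlam1).mul_const ε
  obtain ⟨N₂, hN₂⟩ :=
    eventually_atTop.mp (hdecay.eventually (gt_mem_nhds (by linarith : (0:ℝ) < r/2)))
  obtain ⟨N, hN⟩ := hmix (Metric.ball z (r/2)) O₂ Metric.isOpen_ball hO₂
    ⟨z, Metric.mem_ball_self (by linarith)⟩ ⟨p, hp2⟩
  set n := (mp * mq) * (N + N₂) with hn
  have hm0 : 0 < mp * mq := Nat.mul_pos hmp1 hmq1
  have hnN : N ≤ n := le_trans (Nat.le_add_right _ _) (Nat.le_mul_of_pos_left _ hm0)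
  have hnN₂ : N₂ ≤ n := le_trans (Nat.le_add_left _ _) (Nat.le_mul_of_pos_left _ hm0)
  have hfixp : It φ (n:ℤ) p = p := by
    have h := It_fix hmpfix ((mq * (N+N₂) : ℕ) : ℤ)
    rw [show ((n:ℕ):ℤ) = (mp:ℤ) * ((mq * (N+N₂):ℕ):ℤ) by push_cast [hn]; ring]
    exact h
  have hfixq : It φ (n:ℤ) q = q := by
    have h := It_fix hmqfix ((mp * (N+N₂) : ℕ) : ℤ)
    rw [show ((n:ℕ):ℤ) = (mq:ℤ) * ((mp * (N+N₂):ℕ):ℤ) by push_cast [hn]; ring]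
    exact h
  -- the open set W
  have hWopen : IsOpen (It φ (n:ℤ) '' Metric.ball z (r/2) ∩ O₂) := by
    rw [It_image]
    exact (Metric.isOpen_ball.preimage (continuous_It φ (-(n:ℤ)))).inter hO₂
  have hWne : (It φ (n:ℤ) '' Metric.ball z (r/2) ∩ O₂).Nonempty := hN n hnN
  obtain ⟨y, ⟨⟨x₀, hx₀, hyx⟩, hyO₂⟩, hyU⟩ := hDU.inter_open_nonempty _ hWopen hWne
  have hyUq : UnstableEq φ q y := hyU
  obtain ⟨w, hwS, hwU⟩ := hbr p hp1 y hyO₂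
  have hinvy : It φ (-(n:ℤ)) y = x₀ := by
    rw [← hyx, ← It_add, neg_add_cancel, It_zero]
  refine ⟨It φ (-(n:ℤ)) w, Metric.mem_ball.mpr ?_, ?_, ?_⟩
  · -- in the ball
    have h1 : dist (It φ (-(n:ℤ)) y) (It φ (-(n:ℤ)) w) ≤ lam ^ n * ε :=
      unstable_contract had hεη hwU n
    rw [hinvy] at h1
    have h2 : dist x₀ z < r/2 := Metric.mem_ball.mp hx₀
    have h3 : lam ^ n * ε < r/2 := hN₂ n hnN₂
    calc dist (It φ (-(n:ℤ)) w) z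
        ≤ dist (It φ (-(n:ℤ)) w) x₀ + dist x₀ z := dist_triangle _ _ _
    _ < r := by rw [dist_comm (It φ (-(n:ℤ)) w)]; linarith
  · -- stable equivalence to p
    show StableEq φ p (It φ (-(n:ℤ)) w)
    refine squeeze_zero' (Eventually.of_forall fun k => dist_nonneg) ?_
      (hdecay.comp (tendsto_sub_atTop_nat n))
    filter_upwards [eventually_ge_atTop n] with k hk
    have e1 : It φ (k:ℤ) (It φ (-(n:ℤ)) w) = It φ (((k-n:ℕ)):ℤ) w := by
      rw [← It_add, show ((k:ℤ) + -(n:ℤ)) = (((k-n:ℕ)):ℤ) by omega]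
    have e2 : It φ (k:ℤ) p = It φ (((k-n:ℕ)):ℤ) p := by
      rw [show ((k:ℤ)) = (((k-n:ℕ)):ℤ) + (n:ℤ) by omega, It_add, hfixp]
    rw [e1, e2]
    exact stable_contract had hεη hwS (k-n)
  · -- unstable equivalence to q
    show UnstableEq φ q (It φ (-(n:ℤ)) w)
    have hg : Tendsto (fun k : ℕ =>
        dist (It φ (-((k+n:ℕ):ℤ)) q) (It φ (-((k+n:ℕ):ℤ)) y) + lam ^ (k+n) * ε)
        atTop (𝓝 0) := by
      have t1 := hyUq.comp (tendsto_add_atTop_nat n)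
      have t2 := hdecay.comp (tendsto_add_atTop_nat n)
      simpa using t1.add t2
    refine squeeze_zero (fun k => dist_nonneg) (fun k => ?_) hg
    have e1 : It φ (-(k:ℤ)) (It φ (-(n:ℤ)) w) = It φ (-((k+n:ℕ):ℤ)) w := by
      rw [← It_add, show (-(k:ℤ) + -(n:ℤ)) = -(((k+n:ℕ)):ℤ) by omega]
    have e2 : It φ (-(k:ℤ)) q = It φ (-((k+n:ℕ):ℤ)) q := by
      rw [show (-((k+n:ℕ):ℤ)) = -(k:ℤ) + -(n:ℤ) by omega, It_add, It_neg_fix hfixq]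
    rw [e1, e2]
    calc dist (It φ (-((k+n:ℕ):ℤ)) q) (It φ (-((k+n:ℕ):ℤ)) w)
        ≤ dist (It φ (-((k+n:ℕ):ℤ)) q) (It φ (-((k+n:ℕ):ℤ)) y)
          + dist (It φ (-((k+n:ℕ):ℤ)) y) (It φ (-((k+n:ℕ):ℤ)) w) := dist_triangle _ _ _
    _ ≤ dist (It φ (-((k+n:ℕ):ℤ)) q) (It φ (-((k+n:ℕ):ℤ)) y) + lam ^ (k+n) * ε := by
        have := unstable_contract had hεη hwU (k+n)
        linarith

end Paper
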